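/- Let (g₁, g₂, g₃) and (h₁, h₂, h₃) be two triples of 3-cycles in the alternating group A₄ on {1,2,3,4} such that g₁g₂g₃ = 1 = h₁h₂h₃ and such that each triple generates A₄. Then there exists a permutation σ ∈ S₄ with σ·gᵢ·σ⁻¹ = hᵢ for i = 1, 2, 3. -/
import Mathlib

def c0 : Equiv.Perm (Fin 4) := ⟨![0,2,3,1], ![0,3,1,2], by decide, by decide⟩
def c1 : Equiv.Perm (Fin 4) := ⟨![1,3,2,0], ![3,0,2,1], by decide, by decide⟩

set_option maxRecDepth 100000 in
set_option synthInstance.maxSize 4000 in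
set_option synthInstance.maxHeartbeats 1000000 in
set_option maxHeartbeats 4000000 in
theorem key17 : ∀ a b : Equiv.Perm (Fin 4),
    a ^ 3 = 1 → a ≠ 1 → b ^ 3 = 1 → b ≠ 1 → ((a * b)⁻¹) ^ 3 = 1 →
    b ≠ a → b ≠ a⁻¹ →
    ∃ σ : Equiv.Perm (Fin 4), σ * c0 * σ⁻¹ = a ∧ σ * c1 * σ⁻¹ = b := by decide

theorem aux17 (g : Fin 3 → Equiv.Perm (Fin 4))
    (hg3 : ∀ i, (g i).IsThreeCycle)
    (hgprod : g 0 * g 1 * g 2 = 1)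
    (hggen : Subgroup.closure {g 0, g 1, g 2} = alternatingGroup (Fin 4)) :
    ∃ σ : Equiv.Perm (Fin 4), σ * c0 * σ⁻¹ = g 0 ∧ σ * c1 * σ⁻¹ = g 1 := by
  have ho : ∀ i, orderOf (g i) = 3 := fun i => (hg3 i).orderOf
  have hpow : ∀ i, (g i) ^ 3 = 1 := fun i => by rw [← ho i]; exact pow_orderOf_eq_one _
  have hne1 : ∀ i, g i ≠ 1 := by
    intro i h
    have := ho i
    rw [h, orderOf_one] at this
    omega
  have h2 : g 2 = (g 0 * g 1)⁻¹ := eq_inv_of_mul_eq_one_right hgprod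
  have hne : g 1 ≠ g 0 := by
    intro h
    have hg2 : g 2 = g 0 := by
      have h3 : (g 0 * g 0) * g 0 = 1 := by
        have := hpow 0
        rwa [pow_succ, pow_two] at this
      rw [h2, h]
      exact inv_eq_of_mul_eq_one_right h3
    have hset : ({g 0, g 1, g 2} : Set (Equiv.Perm (Fin 4))) = {g 0} := by
      rw [h, hg2]; simp
    rw [hset] at hggen
    have hcard : Nat.card (Subgroup.closure {g 0} : Subgroup (Equiv.Perm (Fin 4))) = 3 := by
      rw [← Subgroup.zpowers_eq_closure, Nat.card_zpowers, ho 0]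
    rw [hggen] at hcard
    have : Nat.card (alternatingGroup (Fin 4)) = 12 := by
      have h24 : Fintype.card (Equiv.Perm (Fin 4)) = 24 := by
        simp [Fintype.card_perm, Nat.factorial]
      have := two_mul_card_alternatingGroup (α := Fin 4)
      rw [h24] at this
      rw [Nat.card_eq_fintype_card]
      omega
    omega
  have hnei : g 1 ≠ (g 0)⁻¹ := by
    intro h
    apply hne1 2
    rw [h2, h, mul_inv_cancel, inv_one]
  exact key17 (g 0) (g 1) (hpow 0) (hne1 0) (hpow 1) (hne1 1)
    (by rw [← h2]; exact hpow 2) hne hnei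

theorem stmt17 (g h : Fin 3 → Equiv.Perm (Fin 4))
    (hg3 : ∀ i, (g i).IsThreeCycle) (hh3 : ∀ i, (h i).IsThreeCycle)
    (hgprod : g 0 * g 1 * g 2 = 1) (hhprod : h 0 * h 1 * h 2 = 1)
    (hggen : Subgroup.closure {g 0, g 1, g 2} = alternatingGroup (Fin 4))
    (hhgen : Subgroup.closure {h 0, h 1, h 2} = alternatingGroup (Fin 4)) :
    ∃ σ : Equiv.Perm (Fin 4), ∀ i, σ * g i * σ⁻¹ = h i := by
  obtain ⟨σg, hσg0, hσg1⟩ := aux17 g hg3 hgprod hggen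
  obtain ⟨σh, hσh0, hσh1⟩ := aux17 h hh3 hhprod hhgen
  refine ⟨σh * σg⁻¹, ?_⟩
  have e0 : (σh * σg⁻¹) * g 0 * (σh * σg⁻¹)⁻¹ = h 0 := by
    rw [← hσg0, ← hσh0]; group
  have e1 : (σh * σg⁻¹) * g 1 * (σh * σg⁻¹)⁻¹ = h 1 := by
    rw [← hσg1, ← hσh1]; group
  have hg2 : g 2 = (g 0 * g 1)⁻¹ := eq_inv_of_mul_eq_one_right hgprod
  have hh2 : h 2 = (h 0 * h 1)⁻¹ := eq_inv_of_mul_eq_one_right hhprod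
  intro i
  fin_cases i
  · exact e0
  · exact e1
  · show σh * σg⁻¹ * g 2 * (σh * σg⁻¹)⁻¹ = h 2
    rw [hg2, hh2, ← e0, ← e1]; group
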